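/- Let f : P → Q be a map of posets, T a superlinear family of translations on Q, and C a cocomplete category. If two P-modules M, N : P → C are weakly ε-interleaved relative to f, then the pushforwards f_*M and f_*N are weakly ε-interleaved over Q. (Left Kan extensions preserve weak interleavings.) -/

import Mathlib

open CategoryTheory Limits NNReal ENNReal

universe v u

/-- A superlinear family of translations on a poset `Q`. -/
structure SuperlinearFamily (Q : Type v) [PartialOrder Q] where
  trans : ℝ≥0 → Q →o Q
  le_self : ∀ (ε : ℝ≥0) (q : Q), q ≤ trans ε q
  superlinear : ∀ (ε₁ ε₂ : ℝ≥0) (q : Q), trans ε₂ (trans ε₁ q) ≤ trans (ε₁ + ε₂) q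

namespace SuperlinearFamily

variable {Q : Type v} [PartialOrder Q] (T : SuperlinearFamily Q)

lemma trans_mono_eps {ε ε' : ℝ≥0} (h : ε ≤ ε') (q : Q) : T.trans ε q ≤ T.trans ε' q :=
  calc T.trans ε q ≤ T.trans (ε' - ε) (T.trans ε q) := T.le_self _ _
    _ ≤ T.trans (ε + (ε' - ε)) q := T.superlinear _ _ _
    _ = T.trans ε' q := by rw [add_tsub_cancel_of_le h]

variable {C : Type u} [Category.{v} C]

/-- The `ε`-shift `(M)^ε = M ∘ T_ε` of a `Q`-module. -/
def shift (ε : ℝ≥0) (M : Q ⥤ C) : Q ⥤ C := (T.trans ε).monotone.functor ⋙ M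

/-- η^ε : M ⟶ (M)^ε. -/
def eta (ε : ℝ≥0) (M : Q ⥤ C) : M ⟶ T.shift ε M where
  app q := M.map (homOfLE (T.le_self ε q))
  naturality a b u := by
    dsimp [shift, Monotone.functor]
    rw [← M.map_comp, ← M.map_comp]
    exact congrArg M.map (Subsingleton.elim _ _)

/-- η^{ε,ε'} : (M)^ε ⟶ (M)^{ε'} for ε ≤ ε'. -/
def etaLE {ε ε' : ℝ≥0} (h : ε ≤ ε') (M : Q ⥤ C) : T.shift ε M ⟶ T.shift ε' M where
  app q := M.map (homOfLE (T.trans_mono_eps h q))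
  naturality a b u := by
    dsimp [shift, Monotone.functor]
    rw [← M.map_comp, ← M.map_comp]
    exact congrArg M.map (Subsingleton.elim _ _)

/-- Σ^{ε,ε} : ((M)^ε)^ε ⟶ (M)^{2ε}. -/
def sigma (ε : ℝ≥0) (M : Q ⥤ C) : T.shift ε (T.shift ε M) ⟶ T.shift (2 * ε) M where
  app q := M.map (homOfLE (show T.trans ε (T.trans ε q) ≤ T.trans (2 * ε) q by
    rw [two_mul]; exact T.superlinear ε ε q))
  naturality a b u := by
    dsimp [shift, Monotone.functor]
    rw [← M.map_comp, ← M.map_comp]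
    exact congrArg M.map (Subsingleton.elim _ _)

/-- The shift of a natural transformation: (ψ)^ε := T_ε^* ψ. -/
def shiftHom (ε : ℝ≥0) {M N : Q ⥤ C} (ψ : M ⟶ N) : T.shift ε M ⟶ T.shift ε N :=
  Functor.whiskerLeft (T.trans ε).monotone.functor ψ

/-- A weak ε-interleaving of `Q`-modules `M` and `N`. -/
def WeakInterleaving (ε : ℝ≥0) (M N : Q ⥤ C) : Prop :=
  ∃ (φ : M ⟶ T.shift ε N) (ψ : N ⟶ T.shift ε M),
    φ ≫ T.shiftHom ε ψ ≫ T.sigma ε M = T.eta 0 M ≫ T.etaLE zero_le M ∧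
    ψ ≫ T.shiftHom ε φ ≫ T.sigma ε N = T.eta 0 N ≫ T.etaLE zero_le N

/-- The weak interleaving distance between two `Q`-modules, valued in `[0,∞]`. -/
noncomputable def weakDist (M N : Q ⥤ C) : ℝ≥0∞ :=
  ⨅ ε : {ε : ℝ≥0 // T.WeakInterleaving ε M N}, (ε : ℝ≥0∞)

end SuperlinearFamily

namespace SuperlinearFamily

variable {P : Type v} [PartialOrder P] {Q : Type v} [PartialOrder Q]
variable (T : SuperlinearFamily Q)
variable {C : Type u} [Category.{v} C] [HasColimits C]

/-- The ε-shift of a `P`-module relative to `f : P → Q`, i.e. `f^* T_ε^* f_* M`. -/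
noncomputable def relShift (f : P →o Q) (ε : ℝ≥0) (M : P ⥤ C) : P ⥤ C :=
  f.monotone.functor ⋙ T.shift ε (f.monotone.functor.lan.obj M)

/-- η_P^0 : M ⟶ (M)_P^0, built from the unit of `f_* ⊣ f^*` and η^0 over `Q`. -/
noncomputable def relEtaZero (f : P →o Q) (M : P ⥤ C) : M ⟶ T.relShift f 0 M :=
  f.monotone.functor.lanUnit.app M ≫
    Functor.whiskerLeft f.monotone.functor (T.eta 0 (f.monotone.functor.lan.obj M))

/-- η_P^{0,2ε} : (M)_P^0 ⟶ (M)_P^{2ε}. -/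
noncomputable def relEtaLE (f : P →o Q) (ε : ℝ≥0) (M : P ⥤ C) :
    T.relShift f 0 M ⟶ T.relShift f (2 * ε) M :=
  Functor.whiskerLeft f.monotone.functor (T.etaLE zero_le (f.monotone.functor.lan.obj M))

/-- Σ_P^{ε,ε} : ((M)_P^ε)_P^ε ⟶ (M)_P^{2ε}, the composite of `f^* T_ε^* χ T_ε^* f_*`
with `f^* Σ^{ε,ε} f_*`. -/
noncomputable def relSigma (f : P →o Q) (ε : ℝ≥0) (M : P ⥤ C) :
    T.relShift f ε (T.relShift f ε M) ⟶ T.relShift f (2 * ε) M :=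
  Functor.whiskerLeft f.monotone.functor
      (Functor.whiskerLeft (T.trans ε).monotone.functor
        ((f.monotone.functor.lanAdjunction C).counit.app
          (T.shift ε (f.monotone.functor.lan.obj M)))) ≫
    Functor.whiskerLeft f.monotone.functor (T.sigma ε (f.monotone.functor.lan.obj M))

/-- The relative shift of a natural transformation, `(ψ)_P^ε := f^* T_ε^* f_* ψ`. -/
noncomputable def relShiftHom (f : P →o Q) (ε : ℝ≥0) {N M : P ⥤ C} (ψ : N ⟶ M) :
    T.relShift f ε N ⟶ T.relShift f ε M :=
  Functor.whiskerLeft f.monotone.functor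
    (Functor.whiskerLeft (T.trans ε).monotone.functor (f.monotone.functor.lan.map ψ))

/-- A weak ε-interleaving of `P`-modules `M` and `N` relative to `f : P → Q`. -/
def RelWeakInterleaving (f : P →o Q) (ε : ℝ≥0) (M N : P ⥤ C) : Prop :=
  ∃ (φ : M ⟶ T.relShift f ε N) (ψ : N ⟶ T.relShift f ε M),
    φ ≫ T.relShiftHom f ε ψ ≫ T.relSigma f ε M = T.relEtaZero f M ≫ T.relEtaLE f ε M ∧
    ψ ≫ T.relShiftHom f ε φ ≫ T.relSigma f ε N = T.relEtaZero f N ≫ T.relEtaLE f ε N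

/-- The weak relative interleaving distance between two `P`-modules, valued in `[0,∞]`. -/
noncomputable def relWeakDist (f : P →o Q) (M N : P ⥤ C) : ℝ≥0∞ :=
  ⨅ ε : {ε : ℝ≥0 // T.RelWeakInterleaving f ε M N}, (ε : ℝ≥0∞)

end SuperlinearFamily


section Aux

open SuperlinearFamily

variable {P Q : Type v} [PartialOrder P] [PartialOrder Q]
variable {C : Type u} [Category.{v} C] [HasColimits C]

lemma key_transpose (T : SuperlinearFamily Q) (f : P →o Q) (ε : ℝ≥0) (M N : P ⥤ C)
    (φ : M ⟶ T.relShift f ε N) (ψ : N ⟶ T.relShift f ε M)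
    (h1 : φ ≫ T.relShiftHom f ε ψ ≫ T.relSigma f ε M = T.relEtaZero f M ≫ T.relEtaLE f ε M) :
    ((f.monotone.functor.lanAdjunction C).homEquiv M
        (T.shift ε (f.monotone.functor.lan.obj N))).symm φ ≫
      T.shiftHom ε (((f.monotone.functor.lanAdjunction C).homEquiv N
        (T.shift ε (f.monotone.functor.lan.obj M))).symm ψ) ≫
      T.sigma ε (f.monotone.functor.lan.obj M) =
    T.eta 0 (f.monotone.functor.lan.obj M) ≫
      T.etaLE (zero_le) (f.monotone.functor.lan.obj M) := by
  set F := f.monotone.functor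
  set adj := F.lanAdjunction C with hadj
  apply (adj.homEquiv M (T.shift (2 * ε) (F.lan.obj M))).injective
  rw [adj.homEquiv_naturality_right, adj.homEquiv_naturality_right]
  erw [Equiv.apply_symm_apply]
  rw [Adjunction.homEquiv_unit]
  have hψ : ((adj.homEquiv N (T.shift ε (F.lan.obj M))).symm ψ) =
      F.lan.map ψ ≫ adj.counit.app (T.shift ε (F.lan.obj M)) := by
    erw [Adjunction.homEquiv_counit]
    rfl
  calc (φ ≫ ((Functor.whiskeringLeft P Q C).obj F).map
        (T.shiftHom ε ((adj.homEquiv N (T.shift ε (F.lan.obj M))).symm ψ)) ≫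
        ((Functor.whiskeringLeft P Q C).obj F).map (T.sigma ε (F.lan.obj M)) :
          M ⟶ T.relShift f (2 * ε) M)
      = φ ≫ T.relShiftHom f ε ψ ≫ T.relSigma f ε M := by
        rw [hψ]
        dsimp only [Functor.whiskeringLeft_obj_map, relShiftHom, relSigma, shiftHom]
        erw [Functor.whiskerLeft_comp, Functor.map_comp, Category.assoc]
        rfl
    _ = T.relEtaZero f M ≫ T.relEtaLE f ε M := h1
    _ = ((adj.unit.app M ≫ ((Functor.whiskeringLeft P Q C).obj F).map
          (T.eta 0 (F.lan.obj M))) ≫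
        ((Functor.whiskeringLeft P Q C).obj F).map (T.etaLE (ε' := 2 * ε) (zero_le) (F.lan.obj M)) :
          M ⟶ T.relShift f (2 * ε) M) := by
        dsimp only [Functor.whiskeringLeft_obj_map, relEtaZero, relEtaLE]
        rw [hadj, F.lanAdjunction_unit]
        rfl

end Aux

/-- Left Kan extensions preserve weak interleavings: if two `P`-modules are weakly
ε-interleaved relative to `f : P → Q`, then their pushforwards `f_*M`, `f_*N` are weakly
ε-interleaved over `Q`. -/
theorem lan_preserves_weak_interleavings {P Q : Type v} [PartialOrder P] [PartialOrder Q]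
    {C : Type u} [Category.{v} C] [HasColimits C]
    (T : SuperlinearFamily Q) (f : P →o Q) (ε : ℝ≥0) (M N : P ⥤ C)
    (h : T.RelWeakInterleaving f ε M N) :
    T.WeakInterleaving ε (f.monotone.functor.lan.obj M) (f.monotone.functor.lan.obj N) := by
  obtain ⟨φ, ψ, h1, h2⟩ := h
  exact ⟨((f.monotone.functor.lanAdjunction C).homEquiv M _).symm φ,
    ((f.monotone.functor.lanAdjunction C).homEquiv N _).symm ψ,
    key_transpose T f ε M N φ ψ h1, key_transpose T f ε N M ψ φ h2⟩
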